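/- arXiv:1907.06459 — 2 statements merged into one kernel-verified Lean document; each statement's English description precedes it below -/
import Mathlib

section
/- Let Λ₁ ⊂ Λ₂ be finite subgraphs of a finite graph G such that ∂_v Λ₁ and ∂_v Λ₂ are disjoint, let β ∈ (0,∞) and fix a field realization η. Then the ratio of extended partition functions with mixed boundary conditions satisfies (Z̄^{+,−} · Z̄^{−,+}) / (Z̄^{+,+} · Z̄^{−,−}) = ⟨ 1[∂_v Λ₁ is NOT connected to ∂_v Λ₂ through the disagreement set D] ⟩^{∂_v Λ₁ ∪ ∂_v Λ₂, +/−}, where Z̄^{s₁,s₂} is the extended partition function with vertex spins constrained to the constant value s₁ on ∂_v Λ₂ and s₂ on ∂_v Λ₁, and the expectation is under the product of the extended measures conditioned to be all-plus on ∂_v Λ₁ ∪ ∂_v Λ₂ and all-minus on ∂_v Λ₁ ∪ ∂_v Λ₂ respectively. -/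
open MeasureTheory ProbabilityTheory Real BigOperators
open scoped Classical

noncomputable section
namespace RFIM

/-- The two-point spin space `{-1,+1} ⊂ ℤ`. -/
abbrev Spin : Type := ({-1, 1} : Finset ℤ)
/-- The mid-edge value space `{-1,0,+1} ⊂ ℤ`. -/
abbrev Mid : Type := ({-1, 0, 1} : Finset ℤ)

/-- The real value of a spin. -/
def spinR (s : Spin) : ℝ := ((s : ℤ) : ℝ)

/-- The `+1` spin. -/
def pl : Spin := ⟨1, by decide⟩
/-- The `-1` spin. -/
def mn : Spin := ⟨-1, by decide⟩

section GeneralGraph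

variable {V : Type} [Fintype V] [DecidableEq V]

/-- Energy `J σ_u σ_v` carried by an (unordered) edge. -/
def edgeE (J : ℝ) (σ : V → Spin) : Sym2 V → ℝ :=
  Sym2.lift ⟨fun u v => J * spinR (σ u) * spinR (σ v), fun _ _ => by ring⟩

/-- The RFIM Hamiltonian `H(σ) = -∑_{e} J σ_u σ_v - ∑_v (h + ε η_v) σ_v` on a finite graph. -/
def hamG (G : SimpleGraph V) [DecidableRel G.Adj] (J h ε : ℝ) (η : V → ℝ) (σ : V → Spin) : ℝ :=
  - ∑ e ∈ G.edgeFinset, edgeE J σ e - ∑ v, (h + ε * η v) * spinR (σ v)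

/-- Partition function restricted to configurations agreeing with `τ` on `A`. -/
def ZG (G : SimpleGraph V) [DecidableRel G.Adj] (J h ε β : ℝ) (η : V → ℝ)
    (A : Finset V) (τ : V → Spin) : ℝ :=
  ∑ σ : V → Spin,
    if ∀ v ∈ A, σ v = τ v then Real.exp (-(β * hamG G J h ε η σ)) else 0

/-- Thermal expectation of `f` under the Gibbs measure conditioned on `{σ = τ on A}`. -/
def thermalG (G : SimpleGraph V) [DecidableRel G.Adj] (J h ε β : ℝ) (η : V → ℝ)
    (A : Finset V) (τ : V → Spin) (f : (V → Spin) → ℝ) : ℝ :=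
  (∑ σ : V → Spin,
    if ∀ v ∈ A, σ v = τ v then f σ * Real.exp (-(β * hamG G J h ε η σ)) else 0) /
    ZG G J h ε β η A τ

/-- Partition function with spins constrained to the constant value `s₁` on `A₁`
and `s₂` on `A₂`. -/
def Z2G (G : SimpleGraph V) [DecidableRel G.Adj] (J h ε β : ℝ) (η : V → ℝ)
    (A₁ A₂ : Finset V) (s₁ s₂ : Spin) : ℝ :=
  ∑ σ : V → Spin,
    if (∀ v ∈ A₁, σ v = s₁) ∧ (∀ v ∈ A₂, σ v = s₂) then
      Real.exp (-(β * hamG G J h ε η σ)) else 0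

/-- Internal vertex boundary of `Λ` in the graph `G`. -/
def vbdryG (G : SimpleGraph V) [DecidableRel G.Adj] (Λ : Finset V) : Finset V :=
  Λ.filter fun v => ¬ G.neighborFinset v ⊆ Λ

/-- The surface tension `β⁻¹ log (Z^{++} Z^{--} / (Z^{+-} Z^{-+}))` between the internal
vertex boundaries of `Λ₁` and `Λ₂`. -/
def surfTG (G : SimpleGraph V) [DecidableRel G.Adj] (J h ε β : ℝ) (η : V → ℝ)
    (Λ₁ Λ₂ : Finset V) : ℝ :=
  β⁻¹ * Real.log
    ((Z2G G J h ε β η (vbdryG G Λ₁) (vbdryG G Λ₂) pl pl *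
      Z2G G J h ε β η (vbdryG G Λ₁) (vbdryG G Λ₂) mn mn) /
     (Z2G G J h ε β η (vbdryG G Λ₁) (vbdryG G Λ₂) pl mn *
      Z2G G J h ε β η (vbdryG G Λ₁) (vbdryG G Λ₂) mn pl))

end GeneralGraph
section ExtendedModel

variable {V : Type} [Fintype V] [DecidableEq V]

/-- `t = (e^{2Jβ} - 1)^{-1/2}`. -/
def tpar (J β : ℝ) : ℝ := (Real.sqrt (Real.exp (2 * J * β) - 1))⁻¹
/-- `λ = (2 sinh (Jβ))^{1/2}`. -/
def lampar (J β : ℝ) : ℝ := Real.sqrt (2 * Real.sinh (J * β))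

/-- The weight `W(a,b) = λ (δ_{a,b} + t δ_{b,0})`. -/
def Wgt (J β : ℝ) (a b : ℤ) : ℝ :=
  lampar J β * ((if a = b then 1 else 0) + tpar J β * (if b = 0 then 1 else 0))

/-- The product `W(σ_u, k) W(σ_v, k)` over the two endpoints of an edge. -/
def edgeW (J β : ℝ) (σ : V → Spin) (k : ℤ) : Sym2 V → ℝ :=
  Sym2.lift ⟨fun u v => Wgt J β (σ u : ℤ) k * Wgt J β (σ v : ℤ) k, fun _ _ => mul_comm _ _⟩

/-- The weight of an extended configuration `(σ, κ)`:
`∏_{e ∈ E(G)} ∏_{v ∈ e} W(σ_v, κ_e) · e^{-β ∑_v (h + ε η_v) σ_v}`. -/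
def extWeight (G : SimpleGraph V) [DecidableRel G.Adj] (J h ε β : ℝ) (η : V → ℝ)
    (σ : V → Spin) (κ : G.edgeFinset → Mid) : ℝ :=
  (∏ e : G.edgeFinset, edgeW J β σ (κ e : ℤ) (e : Sym2 V)) *
    Real.exp (-(β * ∑ v, (h + ε * η v) * spinR (σ v)))

/-- Extended partition function restricted to vertex configurations agreeing with `τ` on `A`. -/
def extZ (G : SimpleGraph V) [DecidableRel G.Adj] (J h ε β : ℝ) (η : V → ℝ)
    (A : Finset V) (τ : V → Spin) : ℝ :=
  ∑ σ : V → Spin, ∑ κ : G.edgeFinset → Mid,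
    if ∀ v ∈ A, σ v = τ v then extWeight G J h ε β η σ κ else 0

/-- Extended partition function with vertex spins constrained to the constant `s₁` on `A₁`
and `s₂` on `A₂`. -/
def extZ2 (G : SimpleGraph V) [DecidableRel G.Adj] (J h ε β : ℝ) (η : V → ℝ)
    (A₁ A₂ : Finset V) (s₁ s₂ : Spin) : ℝ :=
  ∑ σ : V → Spin, ∑ κ : G.edgeFinset → Mid,
    if (∀ v ∈ A₁, σ v = s₁) ∧ (∀ v ∈ A₂, σ v = s₂) then extWeight G J h ε β η σ κ else 0

/-- Probability of the extended configuration `(σ,κ)` under the extended measure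
conditioned on `{σ = τ on A}`. -/
def extProb (G : SimpleGraph V) [DecidableRel G.Adj] (J h ε β : ℝ) (η : V → ℝ)
    (A : Finset V) (τ : V → Spin) (σ : V → Spin) (κ : G.edgeFinset → Mid) : ℝ :=
  (if ∀ v ∈ A, σ v = τ v then extWeight G J h ε β η σ κ else 0) / extZ G J h ε β η A τ

/-- Expectation of `F` under the product of the extended measures conditioned on
`{σ = τ on A}` and `{σ' = τ' on A}` respectively. -/
def extExp2 (G : SimpleGraph V) [DecidableRel G.Adj] (J h ε β : ℝ) (η : V → ℝ)
    (A : Finset V) (τ τ' : V → Spin)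
    (F : (V → Spin) → (G.edgeFinset → Mid) → (V → Spin) → (G.edgeFinset → Mid) → ℝ) : ℝ :=
  (∑ σ : V → Spin, ∑ κ : G.edgeFinset → Mid, ∑ σ' : V → Spin, ∑ κ' : G.edgeFinset → Mid,
      if (∀ v ∈ A, σ v = τ v) ∧ (∀ v ∈ A, σ' v = τ' v) then
        F σ κ σ' κ' * extWeight G J h ε β η σ κ * extWeight G J h ε β η σ' κ' else 0) /
    (extZ G J h ε β η A τ * extZ G J h ε β η A τ')

/-- The extended graph: vertices of `G` together with one midpoint per edge, each midpoint
joined to the two endpoints of its edge. -/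
def extGraph (G : SimpleGraph V) [DecidableRel G.Adj] :
    SimpleGraph (V ⊕ G.edgeFinset) where
  Adj x y :=
    match x, y with
    | Sum.inl v, Sum.inr e => v ∈ (e : Sym2 V)
    | Sum.inr e, Sum.inl v => v ∈ (e : Sym2 V)
    | _, _ => False
  symm := ⟨by
    rintro (v | e) (w | f) h
    · exact h.elim
    · exact h
    · exact h
    · exact h.elim⟩
  loopless := ⟨by rintro (v | e) h <;> exact h.elim⟩

/-- The values of an extended configuration on the extended vertex set. -/
def extConf {G : SimpleGraph V} [DecidableRel G.Adj]
    (σ : V → Spin) (κ : G.edgeFinset → Mid) : V ⊕ G.edgeFinset → ℤ :=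
  fun z => match z with
  | Sum.inl v => (σ v : ℤ)
  | Sum.inr e => (κ e : ℤ)

/-- The disagreement set of a pair of extended configurations. -/
def DisSet {G : SimpleGraph V} [DecidableRel G.Adj]
    (σ : V → Spin) (κ : G.edgeFinset → Mid) (σ' : V → Spin) (κ' : G.edgeFinset → Mid) :
    Set (V ⊕ G.edgeFinset) :=
  {z | extConf σ κ z ≠ extConf σ' κ' z}

/-- `x` and `y` are connected by a path of `H` all of whose vertices lie in `D`. -/
def ConnectedIn {α : Type} (H : SimpleGraph α) (D : Set α) (x y : α) : Prop :=
  ∃ p : H.Walk x y, ∀ z ∈ p.support, z ∈ D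

end ExtendedModel
section Lattice

/-- The graph (ℓ¹) distance on `ℤ^d`. -/
def dist1 {d : ℕ} (u v : Fin d → ℤ) : ℤ := ∑ i, |u i - v i|

lemma dist1_comm {d : ℕ} (u v : Fin d → ℤ) : dist1 u v = dist1 v u :=
  Finset.sum_congr rfl fun _ _ => abs_sub_comm _ _

/-- The ball `Λ(L) = {v ∈ ℤ^d : d(0,v) ≤ L}` (for the graph distance) as a finite set. -/
def box (d L : ℕ) : Finset (Fin d → ℤ) :=
  (Finset.Icc (fun _ => -(L : ℤ)) (fun _ => (L : ℤ))).filter fun v => dist1 v 0 ≤ (L : ℤ)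

/-- The nearest-neighbor graph on a finite subset `Λ` of `ℤ^d`. -/
def latG (d : ℕ) (Λ : Finset (Fin d → ℤ)) : SimpleGraph Λ where
  Adj u v := dist1 (u : Fin d → ℤ) (v : Fin d → ℤ) = 1
  symm := ⟨fun u v h => by show dist1 (v : Fin d → ℤ) (u : Fin d → ℤ) = 1; rw [dist1_comm]; exact h⟩
  loopless := ⟨fun u h => by simp [dist1] at h⟩

instance {d : ℕ} {Λ : Finset (Fin d → ℤ)} : DecidableRel (latG d Λ).Adj :=
  fun u v => decidable_of_iff (dist1 (u : Fin d → ℤ) (v : Fin d → ℤ) = 1) Iff.rfl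

/-- The nearest neighbors of a point of `ℤ^d`. -/
def nbrs {d : ℕ} (v : Fin d → ℤ) : Finset (Fin d → ℤ) :=
  (Finset.univ.image fun i : Fin d => Function.update v i (v i + 1)) ∪
    (Finset.univ.image fun i : Fin d => Function.update v i (v i - 1))

/-- The internal vertex boundary `∂_v Λ` of a finite `Λ ⊂ ℤ^d`: points of `Λ` having a
nearest neighbor outside `Λ`. -/
def vbdry {d : ℕ} (Λ : Finset (Fin d → ℤ)) : Finset (Fin d → ℤ) :=
  Λ.filter fun v => ¬ nbrs v ⊆ Λ

/-- Restriction of a field on `ℤ^d` to `Λ`. -/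
def restF {d : ℕ} (Λ : Finset (Fin d → ℤ)) (η : (Fin d → ℤ) → ℝ) : Λ → ℝ := fun v => η ↑v

/-- A subset `A ⊆ ℤ^d` viewed inside `Λ`. -/
def inΛ {d : ℕ} (Λ A : Finset (Fin d → ℤ)) : Finset Λ :=
  Finset.univ.filter fun v => (v : Fin d → ℤ) ∈ A

/-- Thermal expectation of `f` in volume `Λ` with the spins on `A` frozen to the constant
value `τ`, at field realization `η`. -/
def thermalL (d : ℕ) (Λ : Finset (Fin d → ℤ)) (J h ε β : ℝ) (η : (Fin d → ℤ) → ℝ)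
    (A : Finset (Fin d → ℤ)) (τ : Spin) (f : (Λ → Spin) → ℝ) : ℝ :=
  thermalG (latG d Λ) J h ε β (restF Λ η) (inΛ Λ A) (fun _ => τ) f

/-- The i.i.d. standard Gaussian field on `Λ` (extended by `0` off `Λ`),
as a measure on fields on `ℤ^d`. -/
def fieldMeasure (d : ℕ) (Λ : Finset (Fin d → ℤ)) : Measure ((Fin d → ℤ) → ℝ) :=
  (Measure.pi fun _ : Λ => gaussianReal 0 1).map
    fun η v => if hv : v ∈ Λ then η ⟨v, hv⟩ else 0

/-- The spin at the origin, as an observable in volume `Λ`. -/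
def obs0 {d : ℕ} (Λ : Finset (Fin d → ℤ)) : (Λ → Spin) → ℝ :=
  fun σ => ∑ v : Λ, if (v : Fin d → ℤ) = 0 then spinR (σ v) else 0

/-- The order parameter
`m(L) = (1/2) 𝔼[⟨σ_0⟩_{Λ(L)}^+ - ⟨σ_0⟩_{Λ(L)}^-]` of the RFIM on `ℤ^d`. -/
def mOrd (d : ℕ) (J h ε β : ℝ) (L : ℕ) : ℝ :=
  ∫ η, (1/2) *
      (thermalL d (box d L) J h ε β η (vbdry (box d L)) pl (obs0 (box d L)) -
       thermalL d (box d L) J h ε β η (vbdry (box d L)) mn (obs0 (box d L)))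
    ∂ fieldMeasure d (box d L)

/-- The disagreement count
`D_{Λ₁,Λ₂}(η) = (1/2) ∑_{v ∈ Λ₁} [⟨σ_v⟩_{Λ₂}^+ - ⟨σ_v⟩_{Λ₂}^-]`. -/
def DL (d : ℕ) (Λ₁ Λ₂ : Finset (Fin d → ℤ)) (J h ε β : ℝ) (η : (Fin d → ℤ) → ℝ) : ℝ :=
  (1/2) * ∑ v : Λ₂,
    if (v : Fin d → ℤ) ∈ Λ₁ then
      thermalL d Λ₂ J h ε β η (vbdry Λ₂) pl (fun σ => spinR (σ v)) -
      thermalL d Λ₂ J h ε β η (vbdry Λ₂) mn (fun σ => spinR (σ v))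
    else 0

/-- The lattice partition function in volume `Λ` with spins constrained to `s₁` on `A₁`
and `s₂` on `A₂`. -/
def Z2L (d : ℕ) (Λ : Finset (Fin d → ℤ)) (J h ε β : ℝ) (η : (Fin d → ℤ) → ℝ)
    (A₁ A₂ : Finset (Fin d → ℤ)) (s₁ s₂ : Spin) : ℝ :=
  Z2G (latG d Λ) J h ε β (restF Λ η) (inΛ Λ A₁) (inΛ Λ A₂) s₁ s₂

/-- The lattice surface tension `T_{Λ₁,Λ₂}(η)`. -/
def surfT (d : ℕ) (Λ₁ Λ₂ : Finset (Fin d → ℤ)) (J h ε β : ℝ)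
    (η : (Fin d → ℤ) → ℝ) : ℝ :=
  β⁻¹ * Real.log
    ((Z2L d Λ₂ J h ε β η (vbdry Λ₁) (vbdry Λ₂) pl pl *
      Z2L d Λ₂ J h ε β η (vbdry Λ₁) (vbdry Λ₂) mn mn) /
     (Z2L d Λ₂ J h ε β η (vbdry Λ₁) (vbdry Λ₂) pl mn *
      Z2L d Λ₂ J h ε β η (vbdry Λ₁) (vbdry Λ₂) mn pl))

/-- Adding a uniform field of intensity `t` on `Λ`. -/
def shiftF {d : ℕ} (Λ : Finset (Fin d → ℤ)) (t : ℝ) (η : (Fin d → ℤ) → ℝ) :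
    (Fin d → ℤ) → ℝ :=
  fun v => if v ∈ Λ then η v + t else η v

end Lattice
section LatticeExtended

/-- Expectation under the product of the all-`τ` and all-`τ'` conditioned extended measures
in volume `Λ ⊂ ℤ^d`, with conditioning on `A`. -/
def extExp2L (d : ℕ) (Λ : Finset (Fin d → ℤ)) (J h ε β : ℝ) (η : (Fin d → ℤ) → ℝ)
    (A : Finset (Fin d → ℤ)) (τ τ' : Spin)
    (F : (Λ → Spin) → ((latG d Λ).edgeFinset → Mid) →
         (Λ → Spin) → ((latG d Λ).edgeFinset → Mid) → ℝ) : ℝ :=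
  extExp2 (latG d Λ) J h ε β (restF Λ η) (inΛ Λ A) (fun _ => τ) (fun _ => τ') F

/-- The annulus `𝒜_{1,2}(ℓ) = Λ(2ℓ) ∖ Λ(ℓ)` in `ℤ²`. -/
def ann (ℓ : ℕ) : Finset (Fin 2 → ℤ) := box 2 (2 * ℓ) \ box 2 ℓ

/-- The inner boundary of the annulus: its vertices with a neighbor in `Λ(ℓ)`. -/
def innerB (ℓ : ℕ) : Finset (Fin 2 → ℤ) :=
  (ann ℓ).filter fun v => (nbrs v ∩ box 2 ℓ).Nonempty

/-- The outer boundary of the annulus: its vertices with a neighbor outside `Λ(2ℓ)`. -/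
def outerB (ℓ : ℕ) : Finset (Fin 2 → ℤ) :=
  (ann ℓ).filter fun v => ¬ nbrs v ⊆ box 2 (2 * ℓ)

/-- The event that the (extended) annulus `𝒜_{1,2}(ℓ)` is crossed by a path of the
disagreement set of length (number of steps) at most `n`. -/
def crossPred (ℓ : ℕ) (n : ℝ)
    (σ : (ann ℓ) → Spin) (κ : (latG 2 (ann ℓ)).edgeFinset → Mid)
    (σ' : (ann ℓ) → Spin) (κ' : (latG 2 (ann ℓ)).edgeFinset → Mid) : Prop :=
  ∃ (a b : (ann ℓ : Finset (Fin 2 → ℤ))), (a : Fin 2 → ℤ) ∈ innerB ℓ ∧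
    (b : Fin 2 → ℤ) ∈ outerB ℓ ∧
    ∃ w : (extGraph (latG 2 (ann ℓ))).Walk (Sum.inl a) (Sum.inl b),
      (∀ z ∈ w.support, z ∈ DisSet σ κ σ' κ') ∧ (w.length : ℝ) ≤ n

/-- The annealed probability that the annulus `𝒜_{1,2}(ℓ)` is crossed by a disagreement
path of length at most `n`, under `plus/minus` boundary conditions on `∂_v 𝒜_{1,2}(ℓ)`. -/
def crossProb (J h ε β : ℝ) (ℓ : ℕ) (n : ℝ) : ℝ :=
  ∫ η, extExp2L 2 (ann ℓ) J h ε β η (vbdry (ann ℓ)) pl mn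
      (fun σ κ σ' κ' => if crossPred ℓ n σ κ σ' κ' then 1 else 0)
    ∂ fieldMeasure 2 (ann ℓ)

end LatticeExtended
section Lasso

/-- An extended vertex of `Λ̄` lies in the (extended) annulus `Λ(8ℓ) ∖ Λ(ℓ)`. -/
def extInAnn (ℓ : ℕ) (Λ : Finset (Fin 2 → ℤ)) :
    (Λ ⊕ (latG 2 Λ).edgeFinset) → Prop
  | Sum.inl v => (v : Fin 2 → ℤ) ∈ box 2 (8 * ℓ) \ box 2 ℓ
  | Sum.inr e => ∀ u ∈ (e : Sym2 (Λ : Finset (Fin 2 → ℤ))),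
      (u : Fin 2 → ℤ) ∈ box 2 (8 * ℓ) \ box 2 ℓ

/-- The lasso event `𝓛(ℓ)`: the union of connected components of the disagreement set in
`Λ̄(25ℓ)` meeting `∂_v Λ(25ℓ)` contains a circuit lying in the annulus `Λ(8ℓ) ∖ Λ(ℓ)`
which surrounds the inner hole (i.e. meets every extended path from `Λ(ℓ)` to
`∂_v Λ(25ℓ)`). -/
def lassoPred (ℓ : ℕ)
    (σ : (box 2 (25 * ℓ)) → Spin) (κ : (latG 2 (box 2 (25 * ℓ))).edgeFinset → Mid)
    (σ' : (box 2 (25 * ℓ)) → Spin) (κ' : (latG 2 (box 2 (25 * ℓ))).edgeFinset → Mid) :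
    Prop :=
  ∃ (x : (box 2 (25 * ℓ) : Finset (Fin 2 → ℤ)) ⊕ (latG 2 (box 2 (25 * ℓ))).edgeFinset)
    (w : (extGraph (latG 2 (box 2 (25 * ℓ)))).Walk x x),
      0 < w.length ∧
      (∀ z ∈ w.support, z ∈ DisSet σ κ σ' κ' ∧ extInAnn ℓ (box 2 (25 * ℓ)) z) ∧
      (∃ b : (box 2 (25 * ℓ) : Finset (Fin 2 → ℤ)), (b : Fin 2 → ℤ) ∈ vbdry (box 2 (25 * ℓ)) ∧
        ConnectedIn (extGraph (latG 2 (box 2 (25 * ℓ)))) (DisSet σ κ σ' κ') x (Sum.inl b)) ∧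
      (∀ (v b : (box 2 (25 * ℓ) : Finset (Fin 2 → ℤ))),
        (v : Fin 2 → ℤ) ∈ box 2 ℓ → (b : Fin 2 → ℤ) ∈ vbdry (box 2 (25 * ℓ)) →
        ∀ q : (extGraph (latG 2 (box 2 (25 * ℓ)))).Walk (Sum.inl v) (Sum.inl b),
          ∃ z ∈ q.support, z ∈ w.support)

/-- The quenched probability of the lasso event `𝓛(ℓ)` under the plus/minus product of
extended measures in `Λ(25ℓ)` with boundary conditions on `∂_v Λ(25ℓ)`. -/
def lassoExpect (J h ε β : ℝ) (ℓ : ℕ) (η : (Fin 2 → ℤ) → ℝ) : ℝ :=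
  extExp2L 2 (box 2 (25 * ℓ)) J h ε β η (vbdry (box 2 (25 * ℓ))) pl mn
    (fun σ κ σ' κ' => if lassoPred ℓ σ κ σ' κ' then 1 else 0)

/-- The annealed probability of the lasso event `𝓛(ℓ)`. -/
def lassoProb (J h ε β : ℝ) (ℓ : ℕ) : ℝ :=
  ∫ η, lassoExpect J h ε β ℓ η ∂ fieldMeasure 2 (box 2 (25 * ℓ))

end Lasso
section Rectangles

/-- Embedding of `ℤ²` into `ℝ²`. -/
def embL (v : Fin 2 → ℤ) : ℝ × ℝ := ((v 0 : ℝ), (v 1 : ℝ))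

/-- Embedding of the extended lattice into `ℝ²`: vertices to lattice points, midpoints of
edges to the midpoints of the corresponding segments. -/
def embEV {Λ : Finset (Fin 2 → ℤ)} :
    (Λ ⊕ (latG 2 Λ).edgeFinset) → ℝ × ℝ
  | Sum.inl v => embL (v : Fin 2 → ℤ)
  | Sum.inr e =>
      Sym2.lift ⟨fun u w : (Λ : Finset (Fin 2 → ℤ)) =>
          ((1 : ℝ) / 2) • (embL (u : Fin 2 → ℤ) + embL (w : Fin 2 → ℤ)),
        fun a b => by
          show ((1 : ℝ) / 2) • (embL (a : Fin 2 → ℤ) + embL (b : Fin 2 → ℤ)) =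
            ((1 : ℝ) / 2) • (embL (b : Fin 2 → ℤ) + embL (a : Fin 2 → ℤ))
          rw [add_comm]⟩ (e : Sym2 (Λ : Finset (Fin 2 → ℤ)))

/-- The union of the connected components of the disagreement set meeting `∂_v Λ`. -/
def bdryComp (Λ : Finset (Fin 2 → ℤ))
    (σ : Λ → Spin) (κ : (latG 2 Λ).edgeFinset → Mid)
    (σ' : Λ → Spin) (κ' : (latG 2 Λ).edgeFinset → Mid) :
    Set (Λ ⊕ (latG 2 Λ).edgeFinset) :=
  {z | ∃ b : (Λ : Finset (Fin 2 → ℤ)), (b : Fin 2 → ℤ) ∈ vbdry Λ ∧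
    ConnectedIn (extGraph (latG 2 Λ)) (DisSet σ κ σ' κ') z (Sum.inl b)}

/-- The polygonal curve in `ℝ²` associated with `𝒞_{∂_v Λ}`: the union of the straight
segments between embedded adjacent extended vertices of `𝒞_{∂_v Λ}`. -/
def curveSet (Λ : Finset (Fin 2 → ℤ))
    (σ : Λ → Spin) (κ : (latG 2 Λ).edgeFinset → Mid)
    (σ' : Λ → Spin) (κ' : (latG 2 Λ).edgeFinset → Mid) : Set (ℝ × ℝ) :=
  ⋃ (z ∈ bdryComp Λ σ κ σ' κ') (z' ∈ bdryComp Λ σ κ σ' κ')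
      (_ : (extGraph (latG 2 Λ)).Adj z z'),
    segment ℝ (embEV z) (embEV z')

/-- A rectangle in `ℝ²` of arbitrary orientation: a corner, a unit direction of the short
side, and the short side length `w` (the long side has length `5w`). -/
structure Rect where
  corner : ℝ × ℝ
  dir : ℝ × ℝ
  w : ℝ

/-- Rotation of a vector of `ℝ²` by `π/2`. -/
def perp (x : ℝ × ℝ) : ℝ × ℝ := (-x.2, x.1)

/-- The closed rectangle determined by the data of `R`. -/
def Rect.carrier (R : Rect) : Set (ℝ × ℝ) :=
  {x | ∃ s t : ℝ, 0 ≤ s ∧ s ≤ R.w ∧ 0 ≤ t ∧ t ≤ 5 * R.w ∧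
    x = R.corner + s • R.dir + t • perp R.dir}

/-- One of the two short sides of `R`. -/
def Rect.sideA (R : Rect) : Set (ℝ × ℝ) :=
  {x | ∃ s : ℝ, 0 ≤ s ∧ s ≤ R.w ∧ x = R.corner + s • R.dir}

/-- The other short side of `R`. -/
def Rect.sideB (R : Rect) : Set (ℝ × ℝ) :=
  {x | ∃ s : ℝ, 0 ≤ s ∧ s ≤ R.w ∧ x = R.corner + s • R.dir + (5 * R.w) • perp R.dir}

/-- The event `Cross(R)`: the curve associated to `𝒞_{∂_v Λ}` contains a continuous path,
staying in `R`, which connects the two short sides of `R`. -/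
def CrossR (Λ : Finset (Fin 2 → ℤ)) (R : Rect)
    (σ : Λ → Spin) (κ : (latG 2 Λ).edgeFinset → Mid)
    (σ' : Λ → Spin) (κ' : (latG 2 Λ).edgeFinset → Mid) : Prop :=
  ∃ γ : ℝ → ℝ × ℝ, ContinuousOn γ (Set.Icc 0 1) ∧
    (∀ t ∈ Set.Icc (0 : ℝ) 1, γ t ∈ curveSet Λ σ κ σ' κ' ∩ R.carrier) ∧
    γ 0 ∈ R.sideA ∧ γ 1 ∈ R.sideB

/-- A collection of rectangles is well-separated (at scale `ℓ`) if each has unit direction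
vector, aspect ratio `1 × 5` with `10 ≤ ℓ(R) ≤ ℓ/160`, lies in the open `ℓ¹`-annulus of radii
`(5/4)ℓ, (7/4)ℓ`, and distinct rectangles are at mutual `ℓ¹` distance at least
`60·max(ℓ(R₁), ℓ(R₂))`. -/
def WellSeparated (ℓ : ℕ) (ℛ : Finset Rect) : Prop :=
  ∀ R ∈ ℛ, (R.dir.1 ^ 2 + R.dir.2 ^ 2 = 1) ∧
    (10 ≤ R.w ∧ R.w ≤ (ℓ : ℝ) / 160) ∧
    (R.carrier ⊆ {x : ℝ × ℝ | 5 / 4 * (ℓ : ℝ) < |x.1| + |x.2| ∧ |x.1| + |x.2| < 7 / 4 * (ℓ : ℝ)}) ∧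
    ∀ R' ∈ ℛ, R ≠ R' → ∀ p ∈ R.carrier, ∀ q ∈ Rect.carrier R',
      60 * max R.w R'.w ≤ |p.1 - q.1| + |p.2 - q.2|

end Rectangles
section NonAnticipatory

variable {V : Type} [Fintype V] [DecidableEq V]

/-- The extended vertices of `Λ̄`: vertices of `Λ` and midpoints of edges with both
endpoints in `Λ`. -/
def extVerts (G : SimpleGraph V) [DecidableRel G.Adj] (Λ : Finset V) :
    Set (V ⊕ G.edgeFinset) :=
  {z | match z with
    | Sum.inl v => v ∈ Λ
    | Sum.inr e => ∀ u ∈ (e : Sym2 V), u ∈ Λ}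

/-- The forward set `S_F` of `S`: extended vertices outside `S` admitting a path of the
extended graph to `∂_v Λ₁` which is disjoint from `S`. -/
def fwdSet (G : SimpleGraph V) [DecidableRel G.Adj] (Λ₁ : Finset V)
    (S : Set (V ⊕ G.edgeFinset)) : Set (V ⊕ G.edgeFinset) :=
  {u | u ∉ S ∧ ∃ a : V, a ∈ vbdryG G Λ₁ ∧
    ∃ p : (extGraph G).Walk u (Sum.inl a), ∀ z ∈ p.support, z ∉ S}

/-- The backward set `S_B`: the complement of `S_F` in the extended vertex set of `Λ̄₂`. -/
def bwdSet (G : SimpleGraph V) [DecidableRel G.Adj] (Λ₁ Λ₂ : Finset V)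
    (S : Set (V ⊕ G.edgeFinset)) : Set (V ⊕ G.edgeFinset) :=
  extVerts G Λ₂ \ fwdSet G Λ₁ S

/-- `S` is a separating set (between `∂_v Λ₁` and `∂_v Λ₂`). -/
def Separating (G : SimpleGraph V) [DecidableRel G.Adj] (Λ₁ Λ₂ : Finset V)
    (S : Set (V ⊕ G.edgeFinset)) : Prop :=
  (∀ a ∈ vbdryG G Λ₁, Sum.inl a ∈ fwdSet G Λ₁ S) ∧
  (∀ b ∈ vbdryG G Λ₂, Sum.inl b ∈ bwdSet G Λ₁ Λ₂ S)

/-- A random set `𝒮` (a function of the pair of extended configurations) is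
non-anticipatory if, for every deterministic `S`, the event `{𝒮 = S}` is determined by
the restriction of the pair of configurations to `S_B`. -/
def NonAnticipatory (G : SimpleGraph V) [DecidableRel G.Adj] (Λ₁ Λ₂ : Finset V)
    (𝒮 : (V → Spin) → (G.edgeFinset → Mid) → (V → Spin) → (G.edgeFinset → Mid) →
      Set (V ⊕ G.edgeFinset)) : Prop :=
  ∀ (S : Set (V ⊕ G.edgeFinset))
    (σ₁ : V → Spin) (κ₁ : G.edgeFinset → Mid) (σ₁' : V → Spin) (κ₁' : G.edgeFinset → Mid)
    (σ₂ : V → Spin) (κ₂ : G.edgeFinset → Mid) (σ₂' : V → Spin) (κ₂' : G.edgeFinset → Mid),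
    (∀ z ∈ bwdSet G Λ₁ Λ₂ S,
      extConf σ₁ κ₁ z = extConf σ₂ κ₂ z ∧ extConf σ₁' κ₁' z = extConf σ₂' κ₂' z) →
    (𝒮 σ₁ κ₁ σ₁' κ₁' = S ↔ 𝒮 σ₂ κ₂ σ₂' κ₂' = S)

end NonAnticipatory
section Misc

variable {V : Type} [Fintype V] [DecidableEq V]

/-- `𝒞_S`: the union of the connected components of the disagreement set meeting
`{Sum.inl s : s ∈ S}`. -/
def compS (G : SimpleGraph V) [DecidableRel G.Adj] (S : Finset V)
    (σ : V → Spin) (κ : G.edgeFinset → Mid) (σ' : V → Spin) (κ' : G.edgeFinset → Mid) :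
    Set (V ⊕ G.edgeFinset) :=
  {z | ∃ s ∈ S, ConnectedIn (extGraph G) (DisSet σ κ σ' κ') z (Sum.inl s)}

/-- The swap map `R_S^A`: if `𝒞_S` meets `A` it is the identity, and otherwise it
exchanges the two configurations on `𝒞_S`. -/
def Rswap (G : SimpleGraph V) [DecidableRel G.Adj] (A S : Finset V)
    (σ : V → Spin) (κ : G.edgeFinset → Mid) (σ' : V → Spin) (κ' : G.edgeFinset → Mid) :
    ((V → Spin) × (G.edgeFinset → Mid)) × ((V → Spin) × (G.edgeFinset → Mid)) :=
  if ∃ a ∈ A, Sum.inl a ∈ compS G S σ κ σ' κ' then ((σ, κ), (σ', κ'))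
  else
    (((fun v => if Sum.inl v ∈ compS G S σ κ σ' κ' then σ' v else σ v),
      (fun e => if Sum.inr e ∈ compS G S σ κ σ' κ' then κ' e else κ e)),
     ((fun v => if Sum.inl v ∈ compS G S σ κ σ' κ' then σ v else σ' v),
      (fun e => if Sum.inr e ∈ compS G S σ κ σ' κ' then κ e else κ' e)))

/-- The number of vertices of `Λ₁` belonging to `𝒞_{∂_v Λ₂}`, i.e. `|Λ₁ ∩ 𝒞_{∂_v Λ₂}|`. -/
def connCount (Λ₁ Λ₂ : Finset (Fin 2 → ℤ))
    (σ : Λ₂ → Spin) (κ : (latG 2 Λ₂).edgeFinset → Mid)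
    (σ' : Λ₂ → Spin) (κ' : (latG 2 Λ₂).edgeFinset → Mid) : ℝ :=
  ∑ v : (Λ₂ : Finset (Fin 2 → ℤ)),
    if (v : Fin 2 → ℤ) ∈ Λ₁ ∧
        (∃ b : (Λ₂ : Finset (Fin 2 → ℤ)), (b : Fin 2 → ℤ) ∈ vbdry Λ₂ ∧
          ConnectedIn (extGraph (latG 2 Λ₂)) (DisSet σ κ σ' κ') (Sum.inl v) (Sum.inl b))
    then 1 else 0

/-- The standard Gaussian density `φ`. -/
def stdGauss (u : ℝ) : ℝ := (Real.sqrt (2 * Real.pi))⁻¹ * Real.exp (-(u ^ 2 / 2))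

/-- The two-sided standard Gaussian tail `χ(s) = 2 ∫_s^∞ φ(u) du`. -/
def chi (s : ℝ) : ℝ := 2 * ∫ u in Set.Ioi s, stdGauss u

/-- The translate `v + Λ` of a finite subset of `ℤ²`. -/
def trF {d : ℕ} (v : Fin d → ℤ) (Λ : Finset (Fin d → ℤ)) : Finset (Fin d → ℤ) :=
  Λ.image fun x => v + x

end Misc

section Prop43Aux

variable {V : Type} [Fintype V] [DecidableEq V]

/-- Swap of vertex spins on `C`. -/
def swS (G : SimpleGraph V) [DecidableRel G.Adj] (C : Set (V ⊕ G.edgeFinset))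
    (σ σ' : V → Spin) : V → Spin :=
  fun v => if Sum.inl v ∈ C then σ' v else σ v

/-- Swap of midpoint values on `C`. -/
def swK (G : SimpleGraph V) [DecidableRel G.Adj] (C : Set (V ⊕ G.edgeFinset))
    (κ κ' : G.edgeFinset → Mid) : G.edgeFinset → Mid :=
  fun e => if Sum.inr e ∈ C then κ' e else κ e

lemma extConf_sw (G : SimpleGraph V) [DecidableRel G.Adj] (C : Set (V ⊕ G.edgeFinset))
    (σ σ' : V → Spin) (κ κ' : G.edgeFinset → Mid) (z : V ⊕ G.edgeFinset) :
    extConf (swS G C σ σ') (swK G C κ κ') z =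
      if z ∈ C then extConf σ' κ' z else extConf σ κ z := by
  cases z with
  | inl v => simp [extConf, swS, apply_ite (fun s : Spin => (s : ℤ))]
  | inr e => simp [extConf, swK, apply_ite (fun m : Mid => (m : ℤ))]

lemma DisSet_sw (G : SimpleGraph V) [DecidableRel G.Adj] (C : Set (V ⊕ G.edgeFinset))
    (σ σ' : V → Spin) (κ κ' : G.edgeFinset → Mid) :
    DisSet (swS G C σ σ') (swK G C κ κ') (swS G C σ' σ) (swK G C κ' κ) =
      DisSet σ κ σ' κ' := by
  ext z
  simp only [DisSet, Set.mem_setOf_eq, extConf_sw]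
  by_cases hz : z ∈ C
  · simp only [if_pos hz]; exact ne_comm
  · simp only [if_neg hz]

lemma compS_congr (G : SimpleGraph V) [DecidableRel G.Adj] (S : Finset V)
    {σ τ : V → Spin} {κ ρ : G.edgeFinset → Mid} {σ' τ' : V → Spin}
    {κ' ρ' : G.edgeFinset → Mid}
    (hD : DisSet σ κ σ' κ' = DisSet τ ρ τ' ρ') :
    compS G S σ κ σ' κ' = compS G S τ ρ τ' ρ' := by
  simp only [compS, hD]

lemma connectedIn_symm {α : Type} {H : SimpleGraph α} {D : Set α} {x y : α}
    (hc : ConnectedIn H D x y) : ConnectedIn H D y x := by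
  obtain ⟨p, hp⟩ := hc
  exact ⟨p.reverse, fun z hz => hp z
    (by simpa [SimpleGraph.Walk.support_reverse] using hz)⟩

lemma mem_compS_of_adj (G : SimpleGraph V) [DecidableRel G.Adj] {S : Finset V}
    {σ : V → Spin} {κ : G.edgeFinset → Mid} {σ' : V → Spin} {κ' : G.edgeFinset → Mid}
    {z z' : V ⊕ G.edgeFinset}
    (hz : z ∈ compS G S σ κ σ' κ') (hadj : (extGraph G).Adj z' z)
    (hz' : z' ∈ DisSet σ κ σ' κ') : z' ∈ compS G S σ κ σ' κ' := by
  obtain ⟨s, hs, p, hp⟩ := hz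
  refine ⟨s, hs, SimpleGraph.Walk.cons hadj p, ?_⟩
  intro x hx
  rw [SimpleGraph.Walk.support_cons, List.mem_cons] at hx
  rcases hx with rfl | hx
  · exact hz'
  · exact hp x hx

lemma mem_compS_of_mem_D (G : SimpleGraph V) [DecidableRel G.Adj] {S : Finset V}
    {σ : V → Spin} {κ : G.edgeFinset → Mid} {σ' : V → Spin} {κ' : G.edgeFinset → Mid}
    {v : V} (hv : v ∈ S) (hD : Sum.inl v ∈ DisSet σ κ σ' κ') :
    Sum.inl v ∈ compS G S σ κ σ' κ' := by
  refine ⟨v, hv, SimpleGraph.Walk.nil, ?_⟩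
  intro x hx
  rw [SimpleGraph.Walk.support_nil, List.mem_singleton] at hx
  subst hx; exact hD

lemma Wgt_ne_zero {J β : ℝ} {a b : ℤ} (hne : Wgt J β a b ≠ 0) : a = b ∨ b = 0 := by
  by_contra hc
  push_neg at hc
  simp [Wgt, hc.1, hc.2] at hne

lemma edgeW_ne_zero {J β : ℝ} (σ : V → Spin) (k : ℤ) (E : Sym2 V) :
    edgeW J β σ k E ≠ 0 → ∀ u ∈ E, (σ u : ℤ) = k ∨ k = 0 := by
  induction E using Sym2.ind with
  | _ x y =>
    intro hne u hu
    rw [Sym2.mem_iff] at hu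
    have h' : Wgt J β ((σ x : ℤ)) k * Wgt J β ((σ y : ℤ)) k ≠ 0 := by
      simpa [edgeW, Sym2.lift_mk] using hne
    rcases hu with rfl | rfl
    · exact Wgt_ne_zero (left_ne_zero_of_mul h')
    · exact Wgt_ne_zero (right_ne_zero_of_mul h')

lemma extW_cond (G : SimpleGraph V) [DecidableRel G.Adj] {J h ε β : ℝ} {η : V → ℝ}
    {σ : V → Spin} {κ : G.edgeFinset → Mid}
    (hw : extWeight G J h ε β η σ κ ≠ 0) (e : G.edgeFinset) :
    ∀ u ∈ (e : Sym2 V), (σ u : ℤ) = (κ e : ℤ) ∨ (κ e : ℤ) = 0 := by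
  apply edgeW_ne_zero
  intro h0
  apply hw
  unfold extWeight
  rw [Finset.prod_eq_zero (Finset.mem_univ e) h0, zero_mul]

lemma spin_cases (s : Spin) : (s : ℤ) = 1 ∨ (s : ℤ) = -1 := by
  have hs := s.2
  simp only [Finset.mem_insert, Finset.mem_singleton] at hs
  tauto

lemma spin_neg_of_ne {s t : Spin} (hne : (s : ℤ) ≠ (t : ℤ)) : (s : ℤ) = -(t : ℤ) := by
  rcases spin_cases s with hs | hs <;> rcases spin_cases t with ht | ht <;> omega

lemma sigma_eq_of_edge (G : SimpleGraph V) [DecidableRel G.Adj] {J h ε β : ℝ} {η : V → ℝ}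
    {σ : V → Spin} {κ : G.edgeFinset → Mid} {σ' : V → Spin} {κ' : G.edgeFinset → Mid}
    (hw : extWeight G J h ε β η σ κ ≠ 0) (hw' : extWeight G J h ε β η σ' κ' ≠ 0)
    (e : G.edgeFinset) {u v : V} (hu : u ∈ (e : Sym2 V)) (hv : v ∈ (e : Sym2 V))
    (hdu : Sum.inl u ∈ DisSet σ κ σ' κ') (hdv : Sum.inl v ∈ DisSet σ κ σ' κ')
    (hde : Sum.inr e ∈ DisSet σ κ σ' κ') : σ u = σ v := by
  have hκ : (κ e : ℤ) ≠ (κ' e : ℤ) := hde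
  have hσu : (σ u : ℤ) ≠ (σ' u : ℤ) := hdu
  have hσv : (σ v : ℤ) ≠ (σ' v : ℤ) := hdv
  apply Subtype.ext
  by_cases hk0 : (κ e : ℤ) = 0
  · have hk' : (κ' e : ℤ) ≠ 0 := fun h0 => hκ (hk0.trans h0.symm)
    have e1 : (σ' u : ℤ) = (κ' e : ℤ) := (extW_cond G hw' e u hu).resolve_right hk'
    have e2 : (σ' v : ℤ) = (κ' e : ℤ) := (extW_cond G hw' e v hv).resolve_right hk'
    have n1 := spin_neg_of_ne hσu
    have n2 := spin_neg_of_ne hσv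
    omega
  · have e1 : (σ u : ℤ) = (κ e : ℤ) := (extW_cond G hw e u hu).resolve_right hk0
    have e2 : (σ v : ℤ) = (κ e : ℤ) := (extW_cond G hw e v hv).resolve_right hk0
    omega

/-- Vertices "represented" by an extended vertex, relative to a disagreement set. -/
def extN (G : SimpleGraph V) [DecidableRel G.Adj] (D : Set (V ⊕ G.edgeFinset)) :
    V ⊕ G.edgeFinset → Set V
  | Sum.inl a => {a}
  | Sum.inr e => {u | u ∈ (e : Sym2 V) ∧ Sum.inl u ∈ D}

lemma walk_const (G : SimpleGraph V) [DecidableRel G.Adj] {D : Set (V ⊕ G.edgeFinset)}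
    {σ : V → Spin}
    (hedge : ∀ (e : G.edgeFinset) (u v : V), u ∈ (e : Sym2 V) → v ∈ (e : Sym2 V) →
      Sum.inl u ∈ D → Sum.inl v ∈ D → Sum.inr e ∈ D → σ u = σ v) :
    ∀ {z w : V ⊕ G.edgeFinset} (p : (extGraph G).Walk z w),
      (∀ x ∈ p.support, x ∈ D) → ∀ u v, u ∈ extN G D z → v ∈ extN G D w → σ u = σ v := by
  intro z w p
  induction p with
  | nil =>
    rename_i z0
    intro hsup u v hu hv
    cases z0 with
    | inl a =>
      simp only [extN, Set.mem_singleton_iff] at hu hv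
      rw [hu, hv]
    | inr e =>
      have heD : Sum.inr e ∈ D := hsup _ (by simp)
      exact hedge e u v hu.1 hv.1 hu.2 hv.2 heD
  | cons hadj q ih =>
    rename_i z0 y0 w0
    intro hsup u v hu hv
    have hq : ∀ x ∈ q.support, x ∈ D := fun x hx =>
      hsup x (by rw [SimpleGraph.Walk.support_cons]; exact List.mem_cons_of_mem _ hx)
    have hzD : z0 ∈ D := hsup z0 (SimpleGraph.Walk.start_mem_support _)
    have hyD : y0 ∈ D := hq y0 q.start_mem_support
    cases z0 with
    | inl a =>
      cases y0 with
      | inl c => exact False.elim hadj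
      | inr e =>
        have hu' : u = a := hu
        subst hu'
        have hae : u ∈ ((e : G.edgeFinset) : Sym2 V) := hadj
        exact ih hq u v ⟨hae, hzD⟩ hv
    | inr e =>
      cases y0 with
      | inl c =>
        have hce : c ∈ ((e : G.edgeFinset) : Sym2 V) := hadj
        have h1 : σ u = σ c := hedge e u c hu.1 hce hu.2 hyD hzD
        have h2 : σ c = σ v := ih hq c v rfl hv
        exact h1.trans h2
      | inr f => exact False.elim hadj

lemma Wpair_swap {J β : ℝ} (pw pe : Prop) [Decidable pw] [Decidable pe] {a a' k k' : ℤ}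
    (h1 : pw → ¬pe → k = k') (h2 : pe → ¬pw → a = a') :
    Wgt J β (if pw then a' else a) (if pe then k' else k) *
      Wgt J β (if pw then a else a') (if pe then k else k') =
    Wgt J β a k * Wgt J β a' k' := by
  by_cases hw : pw <;> by_cases he : pe
  · rw [if_pos hw, if_pos he, if_pos hw, if_pos he]; exact mul_comm _ _
  · rw [if_pos hw, if_neg he, if_pos hw, if_neg he, h1 hw he]; exact mul_comm _ _
  · rw [if_neg hw, if_pos he, if_neg hw, if_pos he, h2 he hw]; exact mul_comm _ _
  · rw [if_neg hw, if_neg he, if_neg hw, if_neg he]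

lemma edge_sw (G : SimpleGraph V) [DecidableRel G.Adj] {J β : ℝ}
    (C : Set (V ⊕ G.edgeFinset))
    (σ : V → Spin) (κ : G.edgeFinset → Mid) (σ' : V → Spin) (κ' : G.edgeFinset → Mid)
    (hC : ∀ ⦃z z' : V ⊕ G.edgeFinset⦄, z ∈ C → (extGraph G).Adj z z' →
      z' ∈ DisSet σ κ σ' κ' → z' ∈ C)
    (e : G.edgeFinset) :
    edgeW J β (swS G C σ σ') ((swK G C κ κ') e : ℤ) (e : Sym2 V) *
      edgeW J β (swS G C σ' σ) ((swK G C κ' κ) e : ℤ) (e : Sym2 V) =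
    edgeW J β σ (κ e : ℤ) (e : Sym2 V) * edgeW J β σ' (κ' e : ℤ) (e : Sym2 V) := by
  have key : ∀ x, x ∈ (e : Sym2 V) →
      Wgt J β ((swS G C σ σ') x : ℤ) ((swK G C κ κ') e : ℤ) *
        Wgt J β ((swS G C σ' σ) x : ℤ) ((swK G C κ' κ) e : ℤ) =
      Wgt J β (σ x : ℤ) (κ e : ℤ) * Wgt J β (σ' x : ℤ) (κ' e : ℤ) := by
    intro x hx
    have hadj1 : (extGraph G).Adj (Sum.inl x) (Sum.inr e) := hx
    have hadj2 : (extGraph G).Adj (Sum.inr e) (Sum.inl x) := hx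
    simp only [swS, swK, apply_ite (fun s : Spin => (s : ℤ)),
      apply_ite (fun m : Mid => (m : ℤ))]
    refine Wpair_swap _ _ ?_ ?_
    · intro hxC heC
      have : Sum.inr e ∉ DisSet σ κ σ' κ' := fun hd => heC (hC hxC hadj1 hd)
      exact not_not.mp this
    · intro heC hxC
      have : Sum.inl x ∉ DisSet σ κ σ' κ' := fun hd => hxC (hC heC hadj2 hd)
      exact not_not.mp this
  obtain ⟨E, hE⟩ := e
  revert key
  induction E using Sym2.ind with
  | _ x y =>
    intro key
    have kx := key x (Sym2.mem_mk_left x y)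
    have ky := key y (Sym2.mem_mk_right x y)
    simp only [edgeW, Sym2.lift_mk]
    calc Wgt J β ((swS G C σ σ') x : ℤ) _ * Wgt J β ((swS G C σ σ') y : ℤ) _ *
          (Wgt J β ((swS G C σ' σ) x : ℤ) _ * Wgt J β ((swS G C σ' σ) y : ℤ) _)
        = (Wgt J β ((swS G C σ σ') x : ℤ) ((swK G C κ κ') ⟨s(x,y), hE⟩ : ℤ) *
            Wgt J β ((swS G C σ' σ) x : ℤ) ((swK G C κ' κ) ⟨s(x,y), hE⟩ : ℤ)) *
          (Wgt J β ((swS G C σ σ') y : ℤ) ((swK G C κ κ') ⟨s(x,y), hE⟩ : ℤ) *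
            Wgt J β ((swS G C σ' σ) y : ℤ) ((swK G C κ' κ) ⟨s(x,y), hE⟩ : ℤ)) := by ring
      _ = (Wgt J β (σ x : ℤ) (κ ⟨s(x,y), hE⟩ : ℤ) * Wgt J β (σ' x : ℤ) (κ' ⟨s(x,y), hE⟩ : ℤ)) *
          (Wgt J β (σ y : ℤ) (κ ⟨s(x,y), hE⟩ : ℤ) * Wgt J β (σ' y : ℤ) (κ' ⟨s(x,y), hE⟩ : ℤ)) := by
            rw [kx, ky]
      _ = _ := by ring

lemma weight_sw (G : SimpleGraph V) [DecidableRel G.Adj] {J h ε β : ℝ} {η : V → ℝ}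
    (C : Set (V ⊕ G.edgeFinset))
    (σ : V → Spin) (κ : G.edgeFinset → Mid) (σ' : V → Spin) (κ' : G.edgeFinset → Mid)
    (hC : ∀ ⦃z z' : V ⊕ G.edgeFinset⦄, z ∈ C → (extGraph G).Adj z z' →
      z' ∈ DisSet σ κ σ' κ' → z' ∈ C) :
    extWeight G J h ε β η (swS G C σ σ') (swK G C κ κ') *
      extWeight G J h ε β η (swS G C σ' σ) (swK G C κ' κ) =
    extWeight G J h ε β η σ κ * extWeight G J h ε β η σ' κ' := by
  unfold extWeight
  rw [mul_mul_mul_comm, mul_mul_mul_comm (∏ e : G.edgeFinset, edgeW J β σ (κ e : ℤ) (e : Sym2 V))]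
  congr 1
  · rw [← Finset.prod_mul_distrib, ← Finset.prod_mul_distrib]
    exact Finset.prod_congr rfl fun e _ => edge_sw G C σ κ σ' κ' hC e
  · rw [← Real.exp_add, ← Real.exp_add]
    congr 1
    have hsum : (∑ v, (h + ε * η v) * spinR ((swS G C σ σ') v)) +
        (∑ v, (h + ε * η v) * spinR ((swS G C σ' σ) v)) =
        (∑ v, (h + ε * η v) * spinR (σ v)) + (∑ v, (h + ε * η v) * spinR (σ' v)) := by
      rw [← Finset.sum_add_distrib, ← Finset.sum_add_distrib]
      refine Finset.sum_congr rfl fun v _ => ?_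
      by_cases hv : Sum.inl v ∈ C <;> simp [swS, hv] <;> ring
    calc -(β * ∑ v, (h + ε * η v) * spinR ((swS G C σ σ') v)) +
          -(β * ∑ v, (h + ε * η v) * spinR ((swS G C σ' σ) v))
        = -(β * ((∑ v, (h + ε * η v) * spinR ((swS G C σ σ') v)) +
            (∑ v, (h + ε * η v) * spinR ((swS G C σ' σ) v)))) := by ring
      _ = -(β * ((∑ v, (h + ε * η v) * spinR (σ v)) +
            (∑ v, (h + ε * η v) * spinR (σ' v)))) := by rw [hsum]
      _ = _ := by ring

/-- The configuration-pair space. -/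
abbrev Cfg4 (G : SimpleGraph V) [DecidableRel G.Adj] : Type :=
  (V → Spin) × (G.edgeFinset → Mid) × (V → Spin) × (G.edgeFinset → Mid)

/-- The swap involution on pairs of extended configurations. -/
def Phi (G : SimpleGraph V) [DecidableRel G.Adj] (A₁ : Finset V) (x : Cfg4 G) : Cfg4 G :=
  (swS G (compS G A₁ x.1 x.2.1 x.2.2.1 x.2.2.2) x.1 x.2.2.1,
   swK G (compS G A₁ x.1 x.2.1 x.2.2.1 x.2.2.2) x.2.1 x.2.2.2,
   swS G (compS G A₁ x.1 x.2.1 x.2.2.1 x.2.2.2) x.2.2.1 x.1,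
   swK G (compS G A₁ x.1 x.2.1 x.2.2.1 x.2.2.2) x.2.2.2 x.2.1)

lemma swS_invol (G : SimpleGraph V) [DecidableRel G.Adj] (C : Set (V ⊕ G.edgeFinset))
    (σ σ' : V → Spin) : swS G C (swS G C σ σ') (swS G C σ' σ) = σ := by
  funext v; by_cases hv : Sum.inl v ∈ C <;> simp [swS, hv]

lemma swK_invol (G : SimpleGraph V) [DecidableRel G.Adj] (C : Set (V ⊕ G.edgeFinset))
    (κ κ' : G.edgeFinset → Mid) : swK G C (swK G C κ κ') (swK G C κ' κ) = κ := by
  funext e; by_cases he : Sum.inr e ∈ C <;> simp [swK, he]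

lemma compS_Phi (G : SimpleGraph V) [DecidableRel G.Adj] (A₁ : Finset V)
    (σ : V → Spin) (κ : G.edgeFinset → Mid) (σ' : V → Spin) (κ' : G.edgeFinset → Mid) :
    compS G A₁ (swS G (compS G A₁ σ κ σ' κ') σ σ') (swK G (compS G A₁ σ κ σ' κ') κ κ')
      (swS G (compS G A₁ σ κ σ' κ') σ' σ) (swK G (compS G A₁ σ κ σ' κ') κ' κ) =
      compS G A₁ σ κ σ' κ' :=
  compS_congr G A₁ (DisSet_sw G _ σ σ' κ κ')

lemma Phi_invol (G : SimpleGraph V) [DecidableRel G.Adj] (A₁ : Finset V) :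
    Function.Involutive (Phi G A₁) := by
  rintro ⟨σ, κ, σ', κ'⟩
  show Phi G A₁ (swS G (compS G A₁ σ κ σ' κ') σ σ', swK G (compS G A₁ σ κ σ' κ') κ κ',
    swS G (compS G A₁ σ κ σ' κ') σ' σ, swK G (compS G A₁ σ κ σ' κ') κ' κ) = (σ, κ, σ', κ')
  unfold Phi
  simp only [compS_Phi]
  exact congrArg₂ Prod.mk (swS_invol G _ σ σ')
    (congrArg₂ Prod.mk (swK_invol G _ κ κ')
      (congrArg₂ Prod.mk (swS_invol G _ σ' σ) (swK_invol G _ κ' κ)))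

lemma mix_eq_non (G : SimpleGraph V) [DecidableRel G.Adj] (J h ε β : ℝ) (η : V → ℝ)
    (A₁ A₂ : Finset V) (σ : V → Spin) (κ : G.edgeFinset → Mid) (σ' : V → Spin)
    (κ' : G.edgeFinset → Mid) (C : Set (V ⊕ G.edgeFinset))
    (hCdef : C = compS G A₁ σ κ σ' κ') :
    (if ((∀ v ∈ A₂, σ v = pl) ∧ ∀ v ∈ A₁, σ v = mn) ∧
        ((∀ v ∈ A₂, σ' v = mn) ∧ ∀ v ∈ A₁, σ' v = pl) then
      extWeight G J h ε β η σ κ * extWeight G J h ε β η σ' κ' else 0) =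
    (if ((∀ v ∈ A₁ ∪ A₂, swS G C σ σ' v = pl) ∧
         ∀ v ∈ A₁ ∪ A₂, swS G C σ' σ v = mn) ∧
        ¬ ∃ a ∈ A₁, ∃ b ∈ A₂, ConnectedIn (extGraph G)
            (DisSet (swS G C σ σ') (swK G C κ κ') (swS G C σ' σ) (swK G C κ' κ))
            (Sum.inl a) (Sum.inl b) then
      extWeight G J h ε β η (swS G C σ σ') (swK G C κ κ') *
        extWeight G J h ε β η (swS G C σ' σ) (swK G C κ' κ) else 0) := by
  have hclosed : ∀ ⦃z z' : V ⊕ G.edgeFinset⦄, z ∈ C → (extGraph G).Adj z z' →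
      z' ∈ DisSet σ κ σ' κ' → z' ∈ C := by
    subst hCdef
    exact fun z z' hz hadj hd => mem_compS_of_adj G hz hadj.symm hd
  have hDsw := DisSet_sw G C σ σ' κ κ'
  have hW := weight_sw G C σ κ σ' κ' (η := η) (J := J) (h := h) (ε := ε) (β := β) hclosed
  by_cases hm : ((∀ v ∈ A₂, σ v = pl) ∧ ∀ v ∈ A₁, σ v = mn) ∧
      ((∀ v ∈ A₂, σ' v = mn) ∧ ∀ v ∈ A₁, σ' v = pl)
  · rw [if_pos hm]
    by_cases hw0 : extWeight G J h ε β η σ κ * extWeight G J h ε β η σ' κ' = 0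
    · rw [hw0, hW, hw0]
      simp
    · obtain ⟨hw1, hw2⟩ := mul_ne_zero_iff.mp hw0
      have hedge : ∀ (e : G.edgeFinset) (u v : V), u ∈ (e : Sym2 V) → v ∈ (e : Sym2 V) →
          Sum.inl u ∈ DisSet σ κ σ' κ' → Sum.inl v ∈ DisSet σ κ σ' κ' →
          Sum.inr e ∈ DisSet σ κ σ' κ' → σ u = σ v :=
        fun e u v hu hv h1 h2 h3 => sigma_eq_of_edge G hw1 hw2 e hu hv h1 h2 h3
      have hnc : ¬ ∃ a ∈ A₁, ∃ b ∈ A₂, ConnectedIn (extGraph G) (DisSet σ κ σ' κ')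
          (Sum.inl a) (Sum.inl b) := by
        rintro ⟨a, ha, b, hb, p, hp⟩
        have hab : σ a = σ b := walk_const G hedge p hp a b rfl rfl
        rw [hm.1.2 a ha, hm.1.1 b hb] at hab
        exact absurd hab (by decide)
      have hmemD : ∀ v ∈ A₁, Sum.inl v ∈ DisSet σ κ σ' κ' := by
        intro v hv
        show (σ v : ℤ) ≠ (σ' v : ℤ)
        rw [hm.1.2 v hv, hm.2.2 v hv]; decide
      have hinC : ∀ v ∈ A₁, Sum.inl v ∈ C := fun v hv => by
        rw [hCdef]; exact mem_compS_of_mem_D G hv (hmemD v hv)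
      have hninC : ∀ v ∈ A₂, Sum.inl v ∉ C := by
        intro v hv hvC
        rw [hCdef] at hvC
        obtain ⟨s, hs, hconn⟩ := hvC
        exact hnc ⟨s, hs, v, hv, connectedIn_symm hconn⟩
      have hcond : ((∀ v ∈ A₁ ∪ A₂, swS G C σ σ' v = pl) ∧
          ∀ v ∈ A₁ ∪ A₂, swS G C σ' σ v = mn) ∧
          ¬ ∃ a ∈ A₁, ∃ b ∈ A₂, ConnectedIn (extGraph G)
            (DisSet (swS G C σ σ') (swK G C κ κ') (swS G C σ' σ) (swK G C κ' κ))
            (Sum.inl a) (Sum.inl b) := by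
        refine ⟨⟨?_, ?_⟩, ?_⟩
        · intro v hv
          by_cases hv1 : v ∈ A₁
          · simp only [swS]; rw [if_pos (hinC v hv1)]; exact hm.2.2 v hv1
          · have hv2 : v ∈ A₂ := by
              rcases Finset.mem_union.mp hv with h' | h'
              · exact absurd h' hv1
              · exact h'
            simp only [swS]; rw [if_neg (hninC v hv2)]; exact hm.1.1 v hv2
        · intro v hv
          by_cases hv1 : v ∈ A₁
          · simp only [swS]; rw [if_pos (hinC v hv1)]; exact hm.1.2 v hv1
          · have hv2 : v ∈ A₂ := by
              rcases Finset.mem_union.mp hv with h' | h'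
              · exact absurd h' hv1
              · exact h'
            simp only [swS]; rw [if_neg (hninC v hv2)]; exact hm.2.1 v hv2
        · rw [hDsw]; exact hnc
      rw [if_pos hcond]
      exact hW.symm
  · rw [if_neg hm]
    have hncond : ¬ (((∀ v ∈ A₁ ∪ A₂, swS G C σ σ' v = pl) ∧
        ∀ v ∈ A₁ ∪ A₂, swS G C σ' σ v = mn) ∧
        ¬ ∃ a ∈ A₁, ∃ b ∈ A₂, ConnectedIn (extGraph G)
          (DisSet (swS G C σ σ') (swK G C κ κ') (swS G C σ' σ) (swK G C κ' κ))
          (Sum.inl a) (Sum.inl b)) := by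
      rintro ⟨⟨hp, hm'⟩, hnc⟩
      rw [hDsw] at hnc
      apply hm
      have hninC : ∀ v ∈ A₂, Sum.inl v ∉ C := by
        intro v hv hvC
        rw [hCdef] at hvC
        obtain ⟨s, hs, hconn⟩ := hvC
        exact hnc ⟨s, hs, v, hv, connectedIn_symm hconn⟩
      have hinC : ∀ v ∈ A₁, Sum.inl v ∈ C := by
        intro v hv
        have hvD : Sum.inl v ∈ DisSet σ κ σ' κ' := by
          rw [← hDsw]
          show ((swS G C σ σ' v : ℤ)) ≠ ((swS G C σ' σ v : ℤ))
          rw [hp v (Finset.mem_union_left _ hv), hm' v (Finset.mem_union_left _ hv)]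
          decide
        rw [hCdef]; exact mem_compS_of_mem_D G hv hvD
      refine ⟨⟨?_, ?_⟩, ?_, ?_⟩
      · intro v hv
        have h0 := hp v (Finset.mem_union_right _ hv)
        simp only [swS] at h0; rwa [if_neg (hninC v hv)] at h0
      · intro v hv
        have h0 := hm' v (Finset.mem_union_left _ hv)
        simp only [swS] at h0; rwa [if_pos (hinC v hv)] at h0
      · intro v hv
        have h0 := hm' v (Finset.mem_union_right _ hv)
        simp only [swS] at h0; rwa [if_neg (hninC v hv)] at h0
      · intro v hv
        have h0 := hp v (Finset.mem_union_left _ hv)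
        simp only [swS] at h0; rwa [if_pos (hinC v hv)] at h0
    rw [if_neg hncond]

/-- The mixed-boundary summand, as a function on configuration pairs. -/
def mixIf (G : SimpleGraph V) [DecidableRel G.Adj] (J h ε β : ℝ) (η : V → ℝ)
    (A₁ A₂ : Finset V) (x : Cfg4 G) : ℝ :=
  if ((∀ v ∈ A₂, x.1 v = pl) ∧ ∀ v ∈ A₁, x.1 v = mn) ∧
      ((∀ v ∈ A₂, x.2.2.1 v = mn) ∧ ∀ v ∈ A₁, x.2.2.1 v = pl) then
    extWeight G J h ε β η x.1 x.2.1 * extWeight G J h ε β η x.2.2.1 x.2.2.2 else 0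

/-- The non-connection summand, as a function on configuration pairs. -/
def nonIf (G : SimpleGraph V) [DecidableRel G.Adj] (J h ε β : ℝ) (η : V → ℝ)
    (A₁ A₂ : Finset V) (x : Cfg4 G) : ℝ :=
  if ((∀ v ∈ A₁ ∪ A₂, x.1 v = pl) ∧ ∀ v ∈ A₁ ∪ A₂, x.2.2.1 v = mn) ∧
      ¬ ∃ a ∈ A₁, ∃ b ∈ A₂, ConnectedIn (extGraph G) (DisSet x.1 x.2.1 x.2.2.1 x.2.2.2)
        (Sum.inl a) (Sum.inl b) then
    extWeight G J h ε β η x.1 x.2.1 * extWeight G J h ε β η x.2.2.1 x.2.2.2 else 0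

lemma mixIf_eq_nonIf_Phi (G : SimpleGraph V) [DecidableRel G.Adj] (J h ε β : ℝ)
    (η : V → ℝ) (A₁ A₂ : Finset V) (x : Cfg4 G) :
    mixIf G J h ε β η A₁ A₂ x = nonIf G J h ε β η A₁ A₂ (Phi G A₁ x) := by
  obtain ⟨σ, κ, σ', κ'⟩ := x
  exact mix_eq_non G J h ε β η A₁ A₂ σ κ σ' κ' (compS G A₁ σ κ σ' κ') rfl

lemma sum_key (G : SimpleGraph V) [DecidableRel G.Adj] (J h ε β : ℝ) (η : V → ℝ)
    (A₁ A₂ : Finset V) :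
    ∑ x : Cfg4 G, mixIf G J h ε β η A₁ A₂ x = ∑ x : Cfg4 G, nonIf G J h ε β η A₁ A₂ x := by
  rw [Finset.sum_congr rfl fun x _ => mixIf_eq_nonIf_Phi G J h ε β η A₁ A₂ x]
  exact Fintype.sum_bijective _ (Phi_invol G A₁).bijective _ _ (fun x => rfl)

lemma key_sum_iterated (G : SimpleGraph V) [DecidableRel G.Adj] (J h ε β : ℝ)
    (η : V → ℝ) (A₁ A₂ : Finset V) :
    (∑ σ : V → Spin, ∑ κ : G.edgeFinset → Mid, ∑ σ' : V → Spin, ∑ κ' : G.edgeFinset → Mid,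
      if ((∀ v ∈ A₂, σ v = pl) ∧ ∀ v ∈ A₁, σ v = mn) ∧
          ((∀ v ∈ A₂, σ' v = mn) ∧ ∀ v ∈ A₁, σ' v = pl) then
        extWeight G J h ε β η σ κ * extWeight G J h ε β η σ' κ' else 0) =
    ∑ σ : V → Spin, ∑ κ : G.edgeFinset → Mid, ∑ σ' : V → Spin, ∑ κ' : G.edgeFinset → Mid,
      if ((∀ v ∈ A₁ ∪ A₂, σ v = pl) ∧ ∀ v ∈ A₁ ∪ A₂, σ' v = mn) ∧
          ¬ ∃ a ∈ A₁, ∃ b ∈ A₂, ConnectedIn (extGraph G) (DisSet σ κ σ' κ')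
            (Sum.inl a) (Sum.inl b) then
        extWeight G J h ε β η σ κ * extWeight G J h ε β η σ' κ' else 0 := by
  have h1 : (∑ x : Cfg4 G, mixIf G J h ε β η A₁ A₂ x) =
      ∑ σ : V → Spin, ∑ κ : G.edgeFinset → Mid, ∑ σ' : V → Spin, ∑ κ' : G.edgeFinset → Mid,
        if ((∀ v ∈ A₂, σ v = pl) ∧ ∀ v ∈ A₁, σ v = mn) ∧
            ((∀ v ∈ A₂, σ' v = mn) ∧ ∀ v ∈ A₁, σ' v = pl) then
          extWeight G J h ε β η σ κ * extWeight G J h ε β η σ' κ' else 0 := by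
    simp only [mixIf, Fintype.sum_prod_type]
  have h2 : (∑ x : Cfg4 G, nonIf G J h ε β η A₁ A₂ x) =
      ∑ σ : V → Spin, ∑ κ : G.edgeFinset → Mid, ∑ σ' : V → Spin, ∑ κ' : G.edgeFinset → Mid,
        if ((∀ v ∈ A₁ ∪ A₂, σ v = pl) ∧ ∀ v ∈ A₁ ∪ A₂, σ' v = mn) ∧
            ¬ ∃ a ∈ A₁, ∃ b ∈ A₂, ConnectedIn (extGraph G) (DisSet σ κ σ' κ')
              (Sum.inl a) (Sum.inl b) then
          extWeight G J h ε β η σ κ * extWeight G J h ε β η σ' κ' else 0 := by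
    simp only [nonIf, Fintype.sum_prod_type]
  rw [← h1, ← h2]
  exact sum_key G J h ε β η A₁ A₂

lemma extZ_union (G : SimpleGraph V) [DecidableRel G.Adj] (J h ε β : ℝ) (η : V → ℝ)
    (B Cs : Finset V) (s : Spin) :
    extZ G J h ε β η (Cs ∪ B) (fun _ => s) = extZ2 G J h ε β η B Cs s s := by
  unfold extZ extZ2
  refine Finset.sum_congr rfl fun σ _ => Finset.sum_congr rfl fun κ _ => ?_
  refine if_congr ?_ rfl rfl
  constructor
  · intro H
    exact ⟨fun v hv => H v (Finset.mem_union_right _ hv),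
      fun v hv => H v (Finset.mem_union_left _ hv)⟩
  · rintro ⟨h2, h1⟩ v hv
    rcases Finset.mem_union.mp hv with h' | h'
    exacts [h1 v h', h2 v h']

lemma Z2_mul (G : SimpleGraph V) [DecidableRel G.Adj] (J h ε β : ℝ) (η : V → ℝ)
    (B Cs : Finset V) (s₁ s₂ s₃ s₄ : Spin) :
    extZ2 G J h ε β η B Cs s₁ s₂ * extZ2 G J h ε β η B Cs s₃ s₄ =
    ∑ σ : V → Spin, ∑ κ : G.edgeFinset → Mid, ∑ σ' : V → Spin, ∑ κ' : G.edgeFinset → Mid,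
      if ((∀ v ∈ B, σ v = s₁) ∧ ∀ v ∈ Cs, σ v = s₂) ∧
          ((∀ v ∈ B, σ' v = s₃) ∧ ∀ v ∈ Cs, σ' v = s₄) then
        extWeight G J h ε β η σ κ * extWeight G J h ε β η σ' κ' else 0 := by
  unfold extZ2
  rw [Finset.sum_mul]
  refine Finset.sum_congr rfl fun σ _ => ?_
  rw [Finset.sum_mul]
  refine Finset.sum_congr rfl fun κ _ => ?_
  rw [Finset.mul_sum]
  refine Finset.sum_congr rfl fun σ' _ => ?_
  rw [Finset.mul_sum]
  refine Finset.sum_congr rfl fun κ' _ => ?_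
  by_cases h1 : (∀ v ∈ B, σ v = s₁) ∧ ∀ v ∈ Cs, σ v = s₂
  · by_cases h2 : (∀ v ∈ B, σ' v = s₃) ∧ ∀ v ∈ Cs, σ' v = s₄
    · rw [if_pos h1, if_pos h2, if_pos (show _ ∧ _ from ⟨h1, h2⟩)]
    · rw [if_neg h2, mul_zero, if_neg fun hc => h2 hc.2]
  · rw [if_neg h1, zero_mul, if_neg fun hc => h1 hc.1]

end Prop43Aux

/-- **Exact representation of the surface tension via disagreement percolation**
(Proposition 4.3): for nested finite subgraphs `Λ₁ ⊆ Λ₂` of a finite graph `G` with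
disjoint internal vertex boundaries, at `β ∈ (0,∞)` and any field realization `η`,
`(Z̄^{+,-} Z̄^{-,+})/(Z̄^{+,+} Z̄^{-,-})` equals the probability, under the product of the
all-plus and all-minus conditioned extended measures on `∂_v Λ₁ ∪ ∂_v Λ₂`, that
`∂_v Λ₁` is NOT connected to `∂_v Λ₂` through the disagreement set. -/
theorem partition_ratio_eq_nonconnection
    {V : Type} [Fintype V] [DecidableEq V] (G : SimpleGraph V) [DecidableRel G.Adj]
    (J h ε β : ℝ) (hJ : 0 < J) (hε : 0 < ε) (hβ : 0 < β) (η : V → ℝ)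
    (Λ₁ Λ₂ : Finset V) (hsub : Λ₁ ⊆ Λ₂)
    (hdisj : Disjoint (vbdryG G Λ₁) (vbdryG G Λ₂)) :
    (extZ2 G J h ε β η (vbdryG G Λ₂) (vbdryG G Λ₁) pl mn *
        extZ2 G J h ε β η (vbdryG G Λ₂) (vbdryG G Λ₁) mn pl) /
      (extZ2 G J h ε β η (vbdryG G Λ₂) (vbdryG G Λ₁) pl pl *
        extZ2 G J h ε β η (vbdryG G Λ₂) (vbdryG G Λ₁) mn mn) =
    extExp2 G J h ε β η (vbdryG G Λ₁ ∪ vbdryG G Λ₂) (fun _ => pl) (fun _ => mn)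
      (fun σ κ σ' κ' =>
        if ¬ ∃ a ∈ vbdryG G Λ₁, ∃ b ∈ vbdryG G Λ₂,
            ConnectedIn (extGraph G) (DisSet σ κ σ' κ') (Sum.inl a) (Sum.inl b)
        then 1 else 0) := by
  classical
  unfold extExp2
  rw [extZ_union G J h ε β η (vbdryG G Λ₂) (vbdryG G Λ₁) pl,
    extZ_union G J h ε β η (vbdryG G Λ₂) (vbdryG G Λ₁) mn]
  congr 1
  rw [Z2_mul G J h ε β η (vbdryG G Λ₂) (vbdryG G Λ₁) pl mn mn pl,
    key_sum_iterated G J h ε β η (vbdryG G Λ₁) (vbdryG G Λ₂)]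
  refine Finset.sum_congr rfl fun σ _ => Finset.sum_congr rfl fun κ _ =>
    Finset.sum_congr rfl fun σ' _ => Finset.sum_congr rfl fun κ' _ => ?_
  beta_reduce
  by_cases hc : (∀ v ∈ vbdryG G Λ₁ ∪ vbdryG G Λ₂, σ v = pl) ∧
      ∀ v ∈ vbdryG G Λ₁ ∪ vbdryG G Λ₂, σ' v = mn
  · by_cases hn : ¬ ∃ a ∈ vbdryG G Λ₁, ∃ b ∈ vbdryG G Λ₂,
        ConnectedIn (extGraph G) (DisSet σ κ σ' κ') (Sum.inl a) (Sum.inl b)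
    · rw [if_pos (show _ ∧ _ from ⟨hc, hn⟩), if_pos hc, if_pos hn, one_mul]
    · rw [if_neg (show ¬(_ ∧ _) from fun hcn => hn hcn.2), if_pos hc, if_neg hn,
        zero_mul, zero_mul]
  · rw [if_neg (show ¬(_ ∧ _) from fun hcn => hc hcn.1), if_neg hc]
end RFIM
end
end

section
/- Let (p_j)_{j≥0} be a monotone non-increasing sequence with 0 ≤ p_j ≤ 1 for all j. Then for each γ > 0 and each integer k ≥ 1 there exists a non-negative integer n with (k+1)·p_k^{1/(1+γ)} − 1 ≤ n ≤ k such that for all integers 0 ≤ j ≤ n, p_n ≤ p_j ≤ p_n·((n+1)/(j+1))^{1+γ}. -/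
open MeasureTheory ProbabilityTheory Real BigOperators
open scoped Classical

noncomputable section
namespace RFIM

/-- **Regular stretches of monotone sequences** (Lemma 6.4): if `(p_j)` is non-increasing
with values in `[0,1]`, then for every `γ > 0` and integer `k ≥ 1` there is an integer `n`
with `(k+1) p_k^{1/(1+γ)} - 1 ≤ n ≤ k` such that
`p_n ≤ p_j ≤ p_n ((n+1)/(j+1))^{1+γ}` for all `0 ≤ j ≤ n`. -/
theorem regular_stretch_of_monotone_sequence
    (p : ℕ → ℝ) (hmono : ∀ i j : ℕ, i ≤ j → p j ≤ p i)
    (hrange : ∀ j : ℕ, 0 ≤ p j ∧ p j ≤ 1)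
    (γ : ℝ) (hγ : 0 < γ) (k : ℕ) (hk : 1 ≤ k) :
    ∃ n : ℕ, n ≤ k ∧
      ((k : ℝ) + 1) * p k ^ ((1 : ℝ) / (1 + γ)) - 1 ≤ (n : ℝ) ∧
      ∀ j : ℕ, j ≤ n →
        p n ≤ p j ∧ p j ≤ p n * (((n : ℝ) + 1) / ((j : ℝ) + 1)) ^ ((1 : ℝ) + γ) := by
  have he : (0:ℝ) < 1 + γ := by linarith
  obtain ⟨n, hn_mem, hn_max⟩ := Finset.exists_max_image (Finset.range (k+1))
    (fun j => ((j:ℝ)+1) ^ ((1:ℝ)+γ) * p j) ⟨k, Finset.self_mem_range_succ k⟩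
  have hnk : n ≤ k := Nat.lt_succ_iff.mp (Finset.mem_range.mp hn_mem)
  have hmax : ∀ j ∈ Finset.range (k+1),
      ((j:ℝ)+1) ^ ((1:ℝ)+γ) * p j ≤ ((n:ℝ)+1) ^ ((1:ℝ)+γ) * p n := hn_max
  have hnpos : (0:ℝ) < (n:ℝ) + 1 := by positivity
  refine ⟨n, hnk, ?_, ?_⟩
  · -- lower bound on n
    have h1 : ((k:ℝ)+1) ^ ((1:ℝ)+γ) * p k ≤ ((n:ℝ)+1) ^ ((1:ℝ)+γ) * p n :=
      hmax k (Finset.self_mem_range_succ k)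
    have h2 : ((n:ℝ)+1) ^ ((1:ℝ)+γ) * p n ≤ ((n:ℝ)+1) ^ ((1:ℝ)+γ) := by
      nlinarith [(hrange n).1, (hrange n).2, Real.rpow_nonneg hnpos.le ((1:ℝ)+γ)]
    have h3 : ((k:ℝ)+1) ^ ((1:ℝ)+γ) * p k ≤ ((n:ℝ)+1) ^ ((1:ℝ)+γ) := h1.trans h2
    have h4 := Real.rpow_le_rpow
      (mul_nonneg (by positivity) (hrange k).1) h3 (by positivity : (0:ℝ) ≤ 1/(1+γ))
    rw [Real.mul_rpow (by positivity) (hrange k).1,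
      ← Real.rpow_mul (by positivity : (0:ℝ) ≤ (k:ℝ)+1),
      ← Real.rpow_mul (by positivity : (0:ℝ) ≤ (n:ℝ)+1),
      mul_one_div_cancel he.ne', Real.rpow_one, Real.rpow_one] at h4
    linarith
  · intro j hj
    have hjk : j ∈ Finset.range (k+1) := Finset.mem_range.mpr (Nat.lt_succ_of_le (hj.trans hnk))
    refine ⟨hmono j n hj, ?_⟩
    have h1 : ((j:ℝ)+1) ^ ((1:ℝ)+γ) * p j ≤ ((n:ℝ)+1) ^ ((1:ℝ)+γ) * p n := hmax j hjk
    have hjpos : (0:ℝ) < (j:ℝ) + 1 := by positivity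
    rw [Real.div_rpow hnpos.le hjpos.le]
    rw [mul_comm, div_mul_eq_mul_div, le_div_iff₀ (Real.rpow_pos_of_pos hjpos _)]
    nlinarith [h1]
end RFIM
end
end
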